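/- arXiv:1111.3248 — 2 statements merged into one kernel-verified Lean document; each statement's English description precedes it below -/
import Mathlib

section
/- Let f: N → M be continuous with M path-connected and N simply connected and path-connected, with basepoints n₀ ∈ N, m₀ = f(n₀). Then the map ι: ΛM → P(f,f) sending a based loop γ to (n₀, γ, n₀) induces a bijection on path components π₀(ΛM) → π₀(P(f,f)). -/
open unitInterval

/-- The homotopy pullback `P(f,f) = {(x, γ, y) : f x = γ 0, f y = γ 1}`. -/
def HPullback {N M : Type*} [TopologicalSpace N] [TopologicalSpace M] (f : C(N, M)) :
    Type _ :=
  {q : N × C(I, M) × N // f q.1 = q.2.1 0 ∧ f q.2.2 = q.2.1 1}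

instance {N M : Type*} [TopologicalSpace N] [TopologicalSpace M] (f : C(N, M)) :
    TopologicalSpace (HPullback f) :=
  instTopologicalSpaceSubtype

/-- The fibre inclusion `ι : ΛM → P(f,f)`, `γ ↦ (n₀, γ, n₀)`. -/
def fibreIncl {N M : Type*} [TopologicalSpace N] [TopologicalSpace M] (f : C(N, M))
    (n₀ : N) (γ : Path (f n₀) (f n₀)) : HPullback f :=
  ⟨(n₀, γ.toContinuousMap, n₀), by simp⟩

namespace PfProof

section JoinedHomotopic

-- Lemma A: Joined in path space ↔ Homotopic
variable {X : Type*} [TopologicalSpace X] {x y : X}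

lemma joined_of_homotopic {p q : Path x y} (h : p.Homotopic q) : Joined p q := by
  obtain ⟨F⟩ := h
  refine ⟨⟨⟨F.eval, ?_⟩, F.eval_zero, F.eval_one⟩⟩
  rw [← Path.continuous_uncurry_iff]
  exact F.continuous.comp continuous_id

lemma homotopic_of_joined {p q : Path x y} (h : Joined p q) : p.Homotopic q := by
  obtain ⟨P⟩ := h
  refine ⟨⟨⟨⟨fun z => P z.1 z.2, by fun_prop⟩, ?_, ?_⟩, ?_⟩⟩
  · intro s; simp [P.source]
  · intro s; simp [P.target]
  · intro t s hs
    rcases hs with h0 | h1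
    · subst h0; simp
    · simp only [Set.mem_singleton_iff] at h1; subst h1; simp

end JoinedHomotopic

section Square

variable {M : Type*} [TopologicalSpace M]

/-- clamped coords: A s = max (2s-1) 0, B s = min (2s) 1 -/
noncomputable def Afn (s : I) : ℝ := max (2 * (s:ℝ) - 1) 0
noncomputable def Bfn (s : I) : ℝ := min (2 * (s:ℝ)) 1

lemma Afn_mem (s : I) : Afn s ∈ Set.Icc (0:ℝ) 1 :=
  ⟨le_max_right _ _, max_le (by have := s.2.2; linarith) zero_le_one⟩
lemma Bfn_mem (s : I) : Bfn s ∈ Set.Icc (0:ℝ) 1 :=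
  ⟨le_min (by have := s.2.1; linarith) zero_le_one, min_le_right _ _⟩

lemma convex_mem {a b : ℝ} (τ : I) (ha : a ∈ Set.Icc (0:ℝ) 1) (hb : b ∈ Set.Icc (0:ℝ) 1) :
    (1 - (τ:ℝ)) * a + (τ:ℝ) * b ∈ Set.Icc (0:ℝ) 1 := by
  obtain ⟨h1, h2⟩ := ha; obtain ⟨h3, h4⟩ := hb; obtain ⟨h5, h6⟩ := τ.2
  constructor <;> nlinarith

/-- the L-shaped interpolation map I × I → I × I -/
noncomputable def ell (z : I × I) : I × I :=
  (⟨(1 - (z.1:ℝ)) * Afn z.2 + (z.1:ℝ) * Bfn z.2, convex_mem z.1 (Afn_mem _) (Bfn_mem _)⟩,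
   ⟨(1 - (z.1:ℝ)) * Bfn z.2 + (z.1:ℝ) * Afn z.2, convex_mem z.1 (Bfn_mem _) (Afn_mem _)⟩)

lemma continuous_ell : Continuous ell := by
  unfold ell Afn Bfn
  fun_prop

/-- The square lemma: if F is a square with bottom γ₀, top γ₁, left u, right v,
then γ₀ ⬝ v ≃ u ⬝ γ₁ rel endpoints. -/
lemma square_homotopic {m₀ m₁ : M} (F : C(I × I, M)) (γ₀ γ₁ : Path m₀ m₁)
    (u : Path m₀ m₀) (v : Path m₁ m₁)
    (hγ₀ : ∀ s, F (0, s) = γ₀ s) (hγ₁ : ∀ s, F (1, s) = γ₁ s)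
    (hu : ∀ t, F (t, 0) = u t) (hv : ∀ t, F (t, 1) = v t) :
    (γ₀.trans v).Homotopic (u.trans γ₁) := by
  have h00 : Afn 0 = 0 := by norm_num [Afn]
  have hB0 : Bfn 0 = 0 := by simp [Bfn]
  have hA1 : Afn 1 = 1 := by norm_num [Afn]
  have hB1 : Bfn 1 = 1 := by simp [Bfn]
  refine ⟨⟨⟨⟨fun z => F (ell z), F.continuous.comp continuous_ell⟩, ?_, ?_⟩, ?_⟩⟩
  · -- map_zero_left : F (ell (0, s)) = (γ₀.trans v) s
    intro s
    show F (ell (0, s)) = (γ₀.trans v) s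
    rw [Path.trans_apply]
    split_ifs with h
    · have hA : Afn s = 0 := by simp [Afn]; linarith
      have hB' : Bfn s = 2 * (s:ℝ) := by simp [Bfn]; linarith
      rw [← hγ₀ ⟨2 * (s:ℝ), by constructor <;> linarith [s.2.1]⟩]
      congr 1
      refine Prod.ext (Subtype.ext ?_) (Subtype.ext ?_) <;> simp [ell, hA, hB']
    · push_neg at h
      have hA : Afn s = 2 * (s:ℝ) - 1 := by simp [Afn]; linarith
      have hB : Bfn s = 1 := by simp [Bfn]; linarith
      rw [← hv ⟨2 * (s:ℝ) - 1, by constructor <;> [linarith; linarith [s.2.2]]⟩]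
      congr 1
      refine Prod.ext (Subtype.ext ?_) (Subtype.ext ?_) <;> simp [ell, hA, hB]
  · -- map_one_left : F (ell (1, s)) = (u.trans γ₁) s
    intro s
    show F (ell (1, s)) = (u.trans γ₁) s
    rw [Path.trans_apply]
    split_ifs with h
    · have hA : Afn s = 0 := by simp [Afn]; linarith
      have hB' : Bfn s = 2 * (s:ℝ) := by simp [Bfn]; linarith
      rw [← hu ⟨2 * (s:ℝ), by constructor <;> linarith [s.2.1]⟩]
      congr 1
      refine Prod.ext (Subtype.ext ?_) (Subtype.ext ?_) <;> simp [ell, hA, hB']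
    · push_neg at h
      have hA : Afn s = 2 * (s:ℝ) - 1 := by simp [Afn]; linarith
      have hB : Bfn s = 1 := by simp [Bfn]; linarith
      rw [← hγ₁ ⟨2 * (s:ℝ) - 1, by constructor <;> [linarith; linarith [s.2.2]]⟩]
      congr 1
      refine Prod.ext (Subtype.ext ?_) (Subtype.ext ?_) <;> simp [ell, hA, hB]
  · -- prop'
    intro t s hs
    rcases hs with h0 | h1
    · subst h0
      show F (ell (t, 0)) = (γ₀.trans v) 0
      have : ell (t, 0) = (0, 0) := by
        refine Prod.ext (Subtype.ext ?_) (Subtype.ext ?_) <;> simp [ell, h00, hB0]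
      rw [this, Path.source, hγ₀ 0, Path.source]
    · simp only [Set.mem_singleton_iff] at h1; subst h1
      show F (ell (t, 1)) = (γ₀.trans v) 1
      have : ell (t, 1) = (1, 1) := by
        refine Prod.ext (Subtype.ext ?_) (Subtype.ext ?_) <;> simp [ell, hA1, hB1]
      rw [this, Path.target, hγ₁ 1, Path.target]


end Square

variable {N M : Type*} [TopologicalSpace N] [TopologicalSpace M]

/-- The underlying point of an element of the homotopy pullback. -/
def _root_.HPullback.pt {f : C(N, M)} (z : HPullback f) : N × C(I, M) × N := Subtype.val z

lemma _root_.HPullback.prop1 {f : C(N, M)} (z : HPullback f) : f z.pt.1 = z.pt.2.1 0 :=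
  (Subtype.prop z).1

lemma _root_.HPullback.prop2 {f : C(N, M)} (z : HPullback f) : f z.pt.2.2 = z.pt.2.1 1 :=
  (Subtype.prop z).2

lemma continuous_pt {f : C(N, M)} : Continuous (HPullback.pt (f := f)) :=
  continuous_subtype_val

lemma injective_step [SimplyConnectedSpace N] (f : C(N, M)) (n₀ : N)
    {γ₀ γ₁ : Path (f n₀) (f n₀)}
    (h : Joined (fibreIncl f n₀ γ₀) (fibreIncl f n₀ γ₁)) : γ₀.Homotopic γ₁ := by
  obtain ⟨p⟩ := h
  have hp : Continuous fun t : I => (p t).pt := continuous_pt.comp p.continuous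
  set xh : Path n₀ n₀ :=
    ⟨⟨fun t => (p t).pt.1, continuous_fst.comp hp⟩,
      by simp [p.source]; rfl, by simp [p.target]; rfl⟩ with hxdef
  set yh : Path n₀ n₀ :=
    ⟨⟨fun t => (p t).pt.2.2, (continuous_snd.comp continuous_snd).comp hp⟩,
      by simp [p.source]; rfl, by simp [p.target]; rfl⟩ with hydef
  set F : C(I × I, M) :=
    ⟨fun z => (p z.1).pt.2.1 z.2, by
      have h1 : Continuous fun z : I × I => (p z.1).pt.2.1 :=
        (continuous_fst.comp continuous_snd).comp (hp.comp continuous_fst)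
      exact ContinuousEval.continuous_eval.comp (h1.prodMk continuous_snd)⟩ with hFdef
  set u : Path (f n₀) (f n₀) := xh.map f.continuous with hudef
  set v : Path (f n₀) (f n₀) := yh.map f.continuous with hvdef
  have hsq : (γ₀.trans v).Homotopic (u.trans γ₁) := by
    refine square_homotopic F γ₀ γ₁ u v ?_ ?_ ?_ ?_
    · intro s; show (p 0).pt.2.1 s = γ₀ s
      rw [p.source]; rfl
    · intro s; show (p 1).pt.2.1 s = γ₁ s
      rw [p.target]; rfl
    · intro t; exact ((p t).prop1).symm
    · intro t; exact ((p t).prop2).symm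
  have hx0 : xh.Homotopic (Path.refl n₀) := SimplyConnectedSpace.paths_homotopic _ _
  have hy0 : yh.Homotopic (Path.refl n₀) := SimplyConnectedSpace.paths_homotopic _ _
  have hrefl : (Path.refl n₀).map f.continuous = Path.refl (f n₀) := by ext; rfl
  have hu0 : u.Homotopic (Path.refl (f n₀)) := hrefl ▸ hx0.map f
  have hv0 : v.Homotopic (Path.refl (f n₀)) := hrefl ▸ hy0.map f
  have h1 : γ₀.Homotopic (γ₀.trans (Path.refl (f n₀))) := ⟨(Path.Homotopy.transRefl γ₀).symm⟩
  have h2 : (γ₀.trans (Path.refl (f n₀))).Homotopic (γ₀.trans v) :=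
    Path.Homotopic.hcomp (Path.Homotopic.refl γ₀) hv0.symm
  have h3 : (u.trans γ₁).Homotopic ((Path.refl (f n₀)).trans γ₁) :=
    Path.Homotopic.hcomp hu0 (Path.Homotopic.refl γ₁)
  have h4 : ((Path.refl (f n₀)).trans γ₁).Homotopic γ₁ := ⟨Path.Homotopy.reflTrans γ₁⟩
  exact ((((h1.trans h2).trans hsq).trans h3).trans h4)

lemma path_congr {X : Type*} [TopologicalSpace X] {x y : X} (γ : Path x y) {s t : I}
    (h : (s:ℝ) = (t:ℝ)) : γ s = γ t := by
  congr 1; exact Subtype.ext h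

variable {N M : Type*} [TopologicalSpace N] [TopologicalSpace M]

set_option maxHeartbeats 2000000 in
lemma surjective_step [PathConnectedSpace N] (f : C(N, M)) (n₀ : N) (z : HPullback f) :
    ∃ γ : Path (f n₀) (f n₀), Joined (fibreIncl f n₀ γ) z := by
  obtain ⟨⟨x, c, y⟩, hx, hy⟩ := z
  obtain ⟨a⟩ : Joined n₀ x := PathConnectedSpace.joined n₀ x
  obtain ⟨b⟩ : Joined n₀ y := PathConnectedSpace.joined n₀ y
  set ch : Path (f x) (f y) := ⟨c, hx.symm, hy.symm⟩ with hch
  set Γ : Path (f n₀) (f n₀) :=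
    (a.map f.continuous).trans (ch.trans ((b.map f.continuous).symm)) with hΓ
  -- evaluation lemmas
  have G1 : ∀ t : I, Γ.extend (↑t / 2) = f (a t) := by
    intro t
    rw [Path.extend_apply Γ ⟨by linarith [t.2.1], by linarith [t.2.2]⟩, Path.trans_apply]
    split_ifs with h
    · simp only [Path.map_coe, Function.comp_apply]
      refine congrArg f (path_congr a ?_)
      show 2 * ((t:ℝ) / 2) = (t:ℝ); ring
    · exfalso; simp only at h; push_neg at h; have := t.2.2; linarith
  have G2 : ∀ t : I, Γ.extend (1 - ↑t / 4) = f (b t) := by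
    intro t
    rw [Path.extend_apply Γ ⟨by linarith [t.2.2], by linarith [t.2.1]⟩, Path.trans_apply]
    split_ifs with h
    · exfalso; simp only at h; have := t.2.2; linarith
    · rw [Path.trans_apply]
      split_ifs with h2
      · have ht : (t : ℝ) = 1 := by simp only at h2; linarith [t.2.2]
        trans (ch 1)
        · refine path_congr ch ?_
          show 2 * (2 * (1 - (t:ℝ) / 4) - 1) = ((1:I):ℝ)
          rw [ht]; norm_num
        · rw [ch.target, show t = (1:I) from Subtype.ext ht, b.target]
      · rw [Path.symm_apply]
        simp only [Path.map_coe, Function.comp_apply]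
        refine congrArg f (path_congr b ?_)
        rw [unitInterval.coe_symm_eq]
        show 1 - (2 * (2 * (1 - (t:ℝ) / 4) - 1) - 1) = (t:ℝ); ring
  have G3 : ∀ r : ℝ, 1/2 ≤ r → r ≤ 3/4 → Γ.extend r = ch.extend (4 * r - 2) := by
    intro r h1 h2
    rw [Path.extend_apply Γ ⟨by linarith, by linarith⟩, Path.trans_apply]
    split_ifs with h
    · have hr : r = 1/2 := by simp only at h; linarith
      subst hr
      trans (f (a 1))
      · simp only [Path.map_coe, Function.comp_apply]
        refine congrArg f (path_congr a ?_)
        show 2 * ((1:ℝ)/2) = ((1:I):ℝ); norm_num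
      · rw [a.target, show (4 * (1/2:ℝ) - 2) = 0 by norm_num, Path.extend_zero]
    · rw [Path.trans_apply]
      split_ifs with h2
      · rw [Path.extend_apply ch ⟨by linarith, by linarith⟩]
        refine path_congr ch ?_
        show 2 * (2 * r - 1) = 4 * r - 2; ring
      · exfalso; simp only at h2; linarith
  -- the dragging family W and reparametrisation family V
  have contW : Continuous fun z : I × I =>
      Γ.extend (min (max (↑z.2) (↑z.1 / 2)) (1 - ↑z.1 / 4)) := by
    apply Γ.continuous_extend.comp
    have c1 : Continuous fun z : I × I => (z.1 : ℝ) := continuous_subtype_val.comp continuous_fst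
    have c2 : Continuous fun z : I × I => (z.2 : ℝ) := continuous_subtype_val.comp continuous_snd
    exact (c2.max (c1.div_const 2)).min ((continuous_const.sub (c1.div_const 4)))
  set Wc : C(I × I, M) :=
    ⟨fun z => Γ.extend (min (max (↑z.2) (↑z.1 / 2)) (1 - ↑z.1 / 4)), contW⟩ with hWdef
  have contV : Continuous fun z : I × I =>
      ch.extend ((1 - ↑z.1) * ↑z.2 + ↑z.1 * (4 * min (max (↑z.2) (1/2 : ℝ)) (3/4 : ℝ) - 2)) := by
    apply ch.continuous_extend.comp
    have c1 : Continuous fun z : I × I => (z.1 : ℝ) := continuous_subtype_val.comp continuous_fst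
    have c2 : Continuous fun z : I × I => (z.2 : ℝ) := continuous_subtype_val.comp continuous_snd
    fun_prop
  set Vc : C(I × I, M) :=
    ⟨fun z => ch.extend ((1 - ↑z.1) * ↑z.2 + ↑z.1 * (4 * min (max (↑z.2) (1/2 : ℝ)) (3/4 : ℝ) - 2)),
      contV⟩ with hVdef
  -- boundary facts for W
  have hW0 : ∀ t : I, f (a t) = Wc.curry t 0 := by
    intro t
    show f (a t) = Γ.extend (min (max ((0:I):ℝ) (↑t / 2)) (1 - ↑t / 4))
    rw [show ((0:I):ℝ) = 0 from rfl, max_eq_right (by linarith [t.2.1]),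
      min_eq_left (by linarith [t.2.2]), G1]
  have hW1 : ∀ t : I, f (b t) = Wc.curry t 1 := by
    intro t
    show f (b t) = Γ.extend (min (max ((1:I):ℝ) (↑t / 2)) (1 - ↑t / 4))
    rw [show ((1:I):ℝ) = 1 from rfl, max_eq_left (by linarith [t.2.2]),
      min_eq_right (by linarith [t.2.1]), G2]
  have hWc0 : Wc.curry 0 = Γ.toContinuousMap := by
    ext s
    show Γ.extend (min (max (↑s) (((0:I):ℝ) / 2)) (1 - ((0:I):ℝ) / 4)) = Γ s
    rw [show ((0:I):ℝ) = 0 from rfl]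
    norm_num [max_eq_left s.2.1, min_eq_left s.2.2, Path.extend_extends' Γ s]
  -- boundary facts for V
  have hV0 : ∀ t : I, f x = Vc.curry t 0 := by
    intro t
    show f x = ch.extend ((1 - ↑t) * ((0:I):ℝ) + ↑t * (4 * min (max ((0:I):ℝ) (1/2:ℝ)) (3/4:ℝ) - 2))
    rw [show ((0:I):ℝ) = 0 from rfl]
    norm_num
  have hV1 : ∀ t : I, f y = Vc.curry t 1 := by
    intro t
    show f y = ch.extend ((1 - ↑t) * ((1:I):ℝ) + ↑t * (4 * min (max ((1:I):ℝ) (1/2:ℝ)) (3/4:ℝ) - 2))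
    rw [show ((1:I):ℝ) = 1 from rfl]
    rw [show (1 - (t:ℝ)) * 1 + ↑t * (4 * min (max (1:ℝ) (1/2:ℝ)) (3/4:ℝ) - 2) = 1 by norm_num,
      Path.extend_one]
  have hVc0 : Vc.curry 0 = c := by
    ext s
    show ch.extend ((1 - ((0:I):ℝ)) * ↑s + ((0:I):ℝ) * _) = c s
    rw [show ((0:I):ℝ) = 0 from rfl]
    rw [show (1 - (0:ℝ)) * ↑s + (0:ℝ) * (4 * min (max (↑s) (1/2:ℝ)) (3/4:ℝ) - 2) = ↑s by ring]
    exact Path.extend_extends' ch s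
  have hV1W1 : Vc.curry 1 = Wc.curry 1 := by
    ext s
    show ch.extend ((1 - ((1:I):ℝ)) * ↑s + ((1:I):ℝ) * (4 * min (max (↑s) (1/2:ℝ)) (3/4:ℝ) - 2))
      = Γ.extend (min (max (↑s) (((1:I):ℝ) / 2)) (1 - ((1:I):ℝ) / 4))
    rw [show ((1:I):ℝ) = 1 from rfl]
    rw [show (1 - (1:ℝ)) * ↑s + (1:ℝ) * (4 * min (max (↑s) (1/2:ℝ)) (3/4:ℝ) - 2)
        = 4 * min (max (↑s) (1/2:ℝ)) (3/4:ℝ) - 2 by ring]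
    rw [show (1 - (1:ℝ)/4) = (3/4:ℝ) by norm_num]
    exact (G3 _ (le_min (le_max_right _ _) (by norm_num)) (min_le_right _ _)).symm
  -- the two paths in the pullback
  set z₁ : HPullback f := ⟨(x, Wc.curry 1, y),
    by rw [← a.target]; exact hW0 1, by rw [← b.target]; exact hW1 1⟩ with hz₁
  have P₁ : Path (fibreIncl f n₀ Γ) z₁ := by
    refine ⟨⟨fun t => ⟨(a t, Wc.curry t, b t), hW0 t, hW1 t⟩, ?_⟩, ?_, ?_⟩
    · apply Continuous.subtype_mk
      exact a.continuous.prodMk ((Wc.curry.continuous.comp continuous_id).prodMk b.continuous)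
    · exact Subtype.ext (Prod.ext a.source (Prod.ext hWc0 b.source))
    · exact Subtype.ext (Prod.ext a.target (Prod.ext rfl b.target))
  have P₂ : Path (⟨(x, c, y), hx, hy⟩ : HPullback f) z₁ := by
    refine ⟨⟨fun t => ⟨(x, Vc.curry t, y), hV0 t, hV1 t⟩, ?_⟩, ?_, ?_⟩
    · apply Continuous.subtype_mk
      exact continuous_const.prodMk ((Vc.curry.continuous.comp continuous_id).prodMk
        continuous_const)
    · exact Subtype.ext (Prod.ext rfl (Prod.ext hVc0 rfl))
    · exact Subtype.ext (Prod.ext rfl (Prod.ext hV1W1 rfl))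
  exact ⟨Γ, ⟨P₁.trans P₂.symm⟩⟩


-- well-definedness: Joined loops give joined points of the pullback
lemma wd_step (f : C(N, M)) (n₀ : N) {γ₀ γ₁ : Path (f n₀) (f n₀)}
    (h : Joined γ₀ γ₁) : Joined (fibreIncl f n₀ γ₀) (fibreIncl f n₀ γ₁) := by
  obtain ⟨P⟩ := h
  refine ⟨⟨⟨fun t => ⟨(n₀, ((P t : Path (f n₀) (f n₀)) : C(I, M)), n₀),
      (P t).source.symm, (P t).target.symm⟩, ?_⟩, ?_, ?_⟩⟩
  · apply Continuous.subtype_mk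
    exact continuous_const.prodMk
      ((continuous_induced_dom.comp P.continuous).prodMk continuous_const)
  · exact Subtype.ext (Prod.ext rfl (Prod.ext (congrArg (fun p : Path (f n₀) (f n₀) => (p : C(I, M))) P.source) rfl))
  · exact Subtype.ext (Prod.ext rfl (Prod.ext (congrArg (fun p : Path (f n₀) (f n₀) => (p : C(I, M))) P.target) rfl))

end PfProof

open PfProof in
/-- For `N` simply connected and `M` path-connected, the fibre inclusion
`ι : ΛM → P(f,f)`, `γ ↦ (n₀, γ, n₀)`, induces a bijection on path components. -/
theorem fibreIncl_pi0_bijective {N M : Type*} [TopologicalSpace N] [TopologicalSpace M]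
    [SimplyConnectedSpace N] [PathConnectedSpace M] (f : C(N, M)) (n₀ : N) :
    ∃ e : ZerothHomotopy (Path (f n₀) (f n₀)) → ZerothHomotopy (HPullback f),
      (∀ γ : Path (f n₀) (f n₀),
        e (Quotient.mk (pathSetoid _) γ) = Quotient.mk (pathSetoid _) (fibreIncl f n₀ γ)) ∧
      Function.Bijective e := by
  refine ⟨Quotient.map (fibreIncl f n₀) (fun γ₀ γ₁ h => wd_step f n₀ h), fun γ => rfl, ?_, ?_⟩
  · intro q₁ q₂
    refine Quotient.inductionOn₂ q₁ q₂ fun γ₀ γ₁ h => ?_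
    exact Quotient.sound (joined_of_homotopic (injective_step f n₀ (Quotient.exact h)))
  · intro q
    refine Quotient.inductionOn q fun z => ?_
    obtain ⟨γ, hγ⟩ := surjective_step f n₀ z
    exact ⟨Quotient.mk (pathSetoid _) γ, Quotient.sound hγ⟩
end

section
/- Let t be the involution on P(f,f) given by t(x, γ, y) = (y, γ̄, x). Under the bijection π₀(P(f,f)) ≅ π₁(M, m₀) (for N simply connected, M path-connected), the induced action of t on π₀ corresponds to the inversion map σ ↦ σ^{-1} on π₁(M, m₀). -/
open unitInterval

/-- The map `t(x, γ, y) = (y, γ̄, x)` on the homotopy pullback, where `γ̄(s) = γ(1-s)`. -/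
def HPullback.swap {N M : Type*} [TopologicalSpace N] [TopologicalSpace M] (f : C(N, M))
    (q : HPullback f) : HPullback f :=
  ⟨(q.1.2.2, (q.1.2.1).comp ⟨unitInterval.symm, unitInterval.continuous_symm⟩, q.1.1),
    by simpa [unitInterval.symm] using q.2.symm⟩

theorem swap_fibreIncl {N M : Type*} [TopologicalSpace N] [TopologicalSpace M] (f : C(N, M)) (n₀ : N)
    (γ : Path (f n₀) (f n₀)) :
    HPullback.swap f (fibreIncl f n₀ γ) = fibreIncl f n₀ γ.symm := by
  apply Subtype.ext
  refine Prod.ext rfl (Prod.ext ?_ rfl)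
  ext t
  rfl

-- Lemma B: homotopic middle paths give Joined pullback points
theorem joined_of_homotopic {N M : Type*} [TopologicalSpace N] [TopologicalSpace M]
    (f : C(N, M)) (x y : N) (a b : Path (f x) (f y)) (h : a.Homotopic b) :
    Joined (⟨(x, a.toContinuousMap, y), by simp⟩ : HPullback f)
      (⟨(x, b.toContinuousMap, y), by simp⟩ : HPullback f) := by
  obtain ⟨H⟩ := h
  refine ⟨⟨⟨fun s => ⟨(x, H.toContinuousMap.curry s, y), ?_, ?_⟩, ?_⟩, ?_, ?_⟩⟩
  · show f x = H (s, 0)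
    simp
  · show f y = H (s, 1)
    simp
  · exact Continuous.subtype_mk (continuous_const.prodMk
      ((H.toContinuousMap.curry.continuous).prodMk continuous_const)) _
  · apply Subtype.ext
    refine Prod.ext rfl (Prod.ext ?_ rfl)
    ext t
    exact H.apply_zero t
  · apply Subtype.ext
    refine Prod.ext rfl (Prod.ext ?_ rfl)
    ext t
    exact H.apply_one t

theorem exists_loop_rep {N M : Type*} [TopologicalSpace N] [TopologicalSpace M]
    [SimplyConnectedSpace N] (f : C(N, M)) (n₀ : N) (q : HPullback f) :
    ∃ γ : Path (f n₀) (f n₀), Joined (fibreIncl f n₀ γ) q := by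
  obtain ⟨⟨x, g, y⟩, hx, hy⟩ := q
  obtain ⟨p⟩ : Joined n₀ x := PathConnectedSpace.joined n₀ x
  obtain ⟨r⟩ : Joined n₀ y := PathConnectedSpace.joined n₀ y
  let g' : Path (f x) (f y) := ⟨g, hx.symm, hy.symm⟩
  let Pp : ∀ s : I, Path (f (p s)) (f x) := fun s =>
    ((p.truncate (↑s) 1).map f.continuous).cast
      (by rw [min_eq_left s.2.2, p.extend_extends' s])
      (by rw [p.extend_one])
  let Pr : ∀ s : I, Path (f (r s)) (f y) := fun s =>
    ((r.truncate (↑s) 1).map f.continuous).cast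
      (by rw [min_eq_left s.2.2, r.extend_extends' s])
      (by rw [r.extend_one])
  let P : ∀ s : I, Path (f (p s)) (f (r s)) := fun s => (Pp s).trans (g'.trans (Pr s).symm)
  have hPp : Continuous ↿Pp := by
    have : Continuous (fun st : I × I => f (p.truncate (↑st.1) 1 st.2)) :=
      f.continuous.comp (p.truncate_continuous_family.comp
        (by fun_prop : Continuous (fun st : I × I => ((↑st.1 : ℝ), ((1:ℝ), st.2)))))
    exact this
  have hPr : Continuous ↿Pr := by
    have : Continuous (fun st : I × I => f (r.truncate (↑st.1) 1 st.2)) :=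
      f.continuous.comp (r.truncate_continuous_family.comp
        (by fun_prop : Continuous (fun st : I × I => ((↑st.1 : ℝ), ((1:ℝ), st.2)))))
    exact this
  have hP : Continuous ↿P := by
    apply Path.trans_continuous_family _ hPp
    apply Path.trans_continuous_family _ (by fun_prop : Continuous (fun st : I × I => g' st.2))
    exact Path.symm_continuous_family _ hPr
  let L : Path (f n₀) (f n₀) := (P 0).cast (by rw [p.source]) (by rw [r.source])
  refine ⟨L, ?_⟩
  have step1 : Joined (fibreIncl f n₀ L)
      (⟨(x, ((P 1).cast (by rw [p.target]) (by rw [r.target]) :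
        Path (f x) (f y)).toContinuousMap, y), by simp⟩ : HPullback f) := by
    refine ⟨⟨⟨fun s => ⟨(p s, (P s).toContinuousMap, r s), (P s).source.symm,
      (P s).target.symm⟩, ?_⟩, ?_, ?_⟩⟩
    · apply Continuous.subtype_mk
      refine p.continuous.prodMk (Continuous.prodMk ?_ r.continuous)
      exact ContinuousMap.continuous_of_continuous_uncurry _ hP
    · apply Subtype.ext
      refine Prod.ext p.source (Prod.ext ?_ r.source)
      ext t; rfl
    · apply Subtype.ext
      refine Prod.ext p.target (Prod.ext ?_ r.target)
      ext t; rfl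
  refine step1.trans ?_
  have hPp1 : ∀ u : I, (Pp 1) u = f x := by
    intro u
    show f (p.extend (min (max ↑u ↑(1:I)) 1)) = f x
    rw [max_eq_right (by exact_mod_cast u.2.2)]
    simp [Path.extend_one]
  have hPr1 : ∀ u : I, (Pr 1) u = f y := by
    intro u
    show f (r.extend (min (max ↑u ↑(1:I)) 1)) = f y
    rw [max_eq_right (by exact_mod_cast u.2.2)]
    simp [Path.extend_one]
  have hhom : ((P 1).cast (by rw [p.target]) (by rw [r.target]) :
      Path (f x) (f y)).Homotopic g' := by
    have e1 : ((P 1).cast (by rw [p.target]) (by rw [r.target]) : Path (f x) (f y))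
        = (Path.refl (f x)).trans (g'.trans (Path.refl (f y)).symm) := by
      ext t
      show Path.trans _ _ t = Path.trans _ _ t
      simp only [Path.trans_apply]
      split_ifs
      all_goals first
        | exact hPp1 _
        | rfl
        | (simp only [Path.refl_symm, Path.symm_apply, Function.comp_apply, Path.refl_apply]
           exact hPr1 _)
    rw [e1, Path.refl_symm]
    have h1 : ((Path.refl (f x)).trans (g'.trans (Path.refl (f y)))).Homotopic
        (g'.trans (Path.refl (f y))) := ⟨Path.Homotopy.reflTrans _⟩
    have h2 : (g'.trans (Path.refl (f y))).Homotopic g' := ⟨Path.Homotopy.transRefl _⟩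
    exact h1.trans h2
  exact joined_of_homotopic f x y _ g' hhom

theorem fromPath_symm {M : Type*} [TopologicalSpace M] (m : M) (γ : Path m m) :
    @FundamentalGroup.fromPath M _ m (Quotient.mk (Path.Homotopic.setoid m m) γ.symm)
      = (@FundamentalGroup.fromPath M _ m (Quotient.mk (Path.Homotopic.setoid m m) γ))⁻¹ := by
  rfl

/-- Under the identification `π₀(P(f,f)) ≅ π₁(M, m₀)` (for `N` simply connected and `M`
path-connected), the involution `t(x, γ, y) = (y, γ̄, x)` corresponds to inversion
`σ ↦ σ⁻¹` in `π₁(M, m₀)`. -/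
theorem swap_pi0_is_inversion {N M : Type*} [TopologicalSpace N] [TopologicalSpace M]
    [SimplyConnectedSpace N] [PathConnectedSpace M] (f : C(N, M)) (n₀ : N)
    (e : ZerothHomotopy (HPullback f) ≃ FundamentalGroup M (f n₀))
    (he : ∀ γ : Path (f n₀) (f n₀),
      e (Quotient.mk (pathSetoid _) (fibreIncl f n₀ γ)) =
        @FundamentalGroup.fromPath M _ (f n₀) (Quotient.mk (Path.Homotopic.setoid (f n₀) (f n₀)) γ))
    (T : ZerothHomotopy (HPullback f) → ZerothHomotopy (HPullback f))
    (hT : ∀ q : HPullback f,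
      T (Quotient.mk (pathSetoid _) q) = Quotient.mk (pathSetoid _) (HPullback.swap f q)) :
    ∀ c : ZerothHomotopy (HPullback f), e (T c) = (e c)⁻¹ := by
  intro c
  obtain ⟨q, rfl⟩ := Quotient.exists_rep c
  obtain ⟨γ, hγ⟩ := exists_loop_rep f n₀ q
  have hc : (Quotient.mk (pathSetoid (HPullback f)) q : ZerothHomotopy (HPullback f))
      = Quotient.mk (pathSetoid (HPullback f)) (fibreIncl f n₀ γ) :=
    (Quotient.sound hγ).symm
  rw [hc, hT, swap_fibreIncl, he, he, fromPath_symm]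
end
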